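/- Every finite simple graph of maximum degree at most 3 admits a matching M such that the quotient graph obtained by contracting all edges of M is bipartite (as a multigraph, equivalently: the graph obtained from G by identifying the endpoints of each matching edge contains no odd closed walk). -/

import Mathlib

open Finset

set_option linter.unusedSectionVars false
section Aux
variable {V : Type*} [Fintype V] [DecidableEq V] (G : SimpleGraph V) [DecidableRel G.Adj]

private def chiZ (c : V → Bool) (a b : V) : ℤ := if G.Adj a b ∧ c a ≠ c b then 1 else 0

private def cutZ (c : V → Bool) : ℤ := ∑ a : V, ∑ b : V, chiZ G c a b

private lemma chiZ_symm (c : V → Bool) (a b : V) : chiZ G c a b = chiZ G c b a := by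
  unfold chiZ
  congr 1
  simp [SimpleGraph.adj_comm, ne_comm, and_comm]

private lemma chiZ_self (c : V → Bool) (a : V) : chiZ G c a a = 0 := by
  simp [chiZ]

private lemma chiZ_update_same (c : V → Bool) (u b : V) :
    chiZ G (Function.update c u (!c u)) u b = if G.Adj u b ∧ c u = c b then 1 else 0 := by
  unfold chiZ
  by_cases h : G.Adj u b
  · have hbu : b ≠ u := fun h' => G.irrefl (h' ▸ h)
    rw [Function.update_of_ne hbu, Function.update_self]
    have hiff : ((!c u) ≠ c b) ↔ (c u = c b) := by
      cases c u <;> cases c b <;> simp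
    simp [hiff]
  · simp [h]

private lemma chiZ_update_other (c : V → Bool) (u a b : V) (ha : a ≠ u) (hb : b ≠ u) :
    chiZ G (Function.update c u (!c u)) a b = chiZ G c a b := by
  unfold chiZ
  rw [Function.update_of_ne ha, Function.update_of_ne hb]

private lemma cutZ_flip (c : V → Bool) (u : V) :
    cutZ G (Function.update c u (!c u)) = cutZ G c
      + 2 * (((univ.filter fun b => G.Adj u b ∧ c u = c b).card : ℤ)
           - ((univ.filter fun b => G.Adj u b ∧ c u ≠ c b).card : ℤ)) := by
  set c' := Function.update c u (!c u) with hc'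
  set F : V → V → ℤ := fun a b => chiZ G c' a b - chiZ G c a b with hF
  have hF0 : ∀ a b, a ≠ u → b ≠ u → F a b = 0 := by
    intro a b ha hb
    simp [hF, hc', chiZ_update_other G c u a b ha hb]
  have hFsymm : ∀ a b, F a b = F b a := by
    intro a b; simp [hF, chiZ_symm]
  have hFuu : F u u = 0 := by
    simp [hF, chiZ_self]
  have hrow : ∀ a, a ≠ u → (∑ b : V, F a b) = F a u := by
    intro a ha
    refine Finset.sum_eq_single u (fun b _ hb => hF0 a b ha hb) (fun h => absurd (mem_univ u) h)
  have hsplit : (∑ a : V, ∑ b : V, F a b) = 2 * (∑ b : V, F u b) := by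
    rw [← Finset.add_sum_erase univ (fun a => ∑ b : V, F a b) (mem_univ u)]
    have h1 : (∑ a ∈ univ.erase u, ∑ b : V, F a b) = ∑ a ∈ univ.erase u, F u a := by
      refine Finset.sum_congr rfl (fun a ha => ?_)
      rw [hrow a (Finset.ne_of_mem_erase ha), hFsymm]
    rw [h1]
    have h2 : (∑ a ∈ univ.erase u, F u a) = ∑ a : V, F u a := by
      rw [← Finset.add_sum_erase univ (F u) (mem_univ u), hFuu, zero_add]
    rw [h2]; ring
  have hsum : (∑ b : V, F u b)
      = ((univ.filter fun b => G.Adj u b ∧ c u = c b).card : ℤ)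
        - ((univ.filter fun b => G.Adj u b ∧ c u ≠ c b).card : ℤ) := by
    rw [Finset.sum_sub_distrib (f := fun b => chiZ G c' u b) (g := fun b => chiZ G c u b)]
    congr 1
    · rw [show (∑ b : V, chiZ G c' u b) = ∑ b : V, (if G.Adj u b ∧ c u = c b then (1:ℤ) else 0) from
        Finset.sum_congr rfl (fun b _ => chiZ_update_same G c u b)]
      rw [Finset.sum_boole]
    · unfold chiZ
      rw [Finset.sum_boole]
  have : cutZ G c' - cutZ G c = ∑ a : V, ∑ b : V, F a b := by
    unfold cutZ
    rw [← Finset.sum_sub_distrib]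
    refine Finset.sum_congr rfl (fun a _ => ?_)
    rw [← Finset.sum_sub_distrib]
  rw [hsplit, hsum] at this
  linarith

end Aux

/-- Every finite simple graph of maximum degree at most 3 admits a matching M whose
contraction yields a bipartite multigraph: there is a 2-coloring of the vertices that is
constant on each matching edge and proper on every other edge. -/
theorem subcubic_matching_contraction_bipartite {V : Type*} [Fintype V] [DecidableEq V]
    (G : SimpleGraph V) [DecidableRel G.Adj]
    (hdeg : ∀ v : V, G.degree v ≤ 3) :
    ∃ M : Set (Sym2 V), M ⊆ G.edgeSet ∧
      (∀ e ∈ M, ∀ f ∈ M, ∀ v : V, v ∈ e → v ∈ f → e = f) ∧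
      ∃ c : V → Bool, ∀ u v : V, G.Adj u v →
        (s(u, v) ∈ M → c u = c v) ∧ (s(u, v) ∉ M → c u ≠ c v) := by
  obtain ⟨c, -, hc⟩ := Finset.exists_max_image (univ : Finset (V → Bool)) (cutZ G)
    Finset.univ_nonempty
  -- key claim: each vertex has at most one monochromatic neighbor
  have key : ∀ u : V, (univ.filter fun b => G.Adj u b ∧ c u = c b).card ≤ 1 := by
    intro u
    by_contra h
    push_neg at h
    have hm : 2 ≤ (univ.filter fun b => G.Adj u b ∧ c u = c b).card := h
    have hpart : (univ.filter fun b => G.Adj u b ∧ c u = c b).card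
        + (univ.filter fun b => G.Adj u b ∧ c u ≠ c b).card ≤ 3 := by
      have h1 : (univ.filter fun b => G.Adj u b ∧ c u = c b)
          = (univ.filter fun b => G.Adj u b).filter (fun b => c u = c b) := by
        rw [Finset.filter_filter]
      have h2 : (univ.filter fun b => G.Adj u b ∧ c u ≠ c b)
          = (univ.filter fun b => G.Adj u b).filter (fun b => ¬ (c u = c b)) := by
        rw [Finset.filter_filter]
      rw [h1, h2, Finset.card_filter_add_card_filter_not]
      have : (univ.filter fun b => G.Adj u b) = G.neighborFinset u := by
        ext b; simp [SimpleGraph.mem_neighborFinset]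
      rw [this]
      exact hdeg u
    have hb : (univ.filter fun b => G.Adj u b ∧ c u ≠ c b).card ≤ 1 := by omega
    have hflip := cutZ_flip G c u
    have hle := hc (Function.update c u (!c u)) (mem_univ _)
    have : (2:ℤ) ≤ ((univ.filter fun b => G.Adj u b ∧ c u = c b).card : ℤ) := by
      exact_mod_cast hm
    have : ((univ.filter fun b => G.Adj u b ∧ c u ≠ c b).card : ℤ) ≤ 1 := by
      exact_mod_cast hb
    omega
  refine ⟨{e : Sym2 V | e ∈ G.edgeSet ∧ (e.map c).IsDiag}, fun e he => he.1, ?_, c, ?_⟩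
  · intro e he f hf v hve hvf
    obtain ⟨x, rfl⟩ := Sym2.mem_iff_exists.mp hve
    obtain ⟨y, rfl⟩ := Sym2.mem_iff_exists.mp hvf
    obtain ⟨hex, hcx⟩ := he
    obtain ⟨hfy, hcy⟩ := hf
    rw [SimpleGraph.mem_edgeSet] at hex hfy
    rw [Sym2.map_pair_eq, Sym2.mk_isDiag_iff] at hcx hcy
    have hx : x ∈ univ.filter fun b => G.Adj v b ∧ c v = c b := by
      simp [hex, hcx]
    have hy : y ∈ univ.filter fun b => G.Adj v b ∧ c v = c b := by
      simp [hfy, hcy]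
    have := Finset.card_le_one.mp (key v) x hx y hy
    rw [this]
  · intro u v huv
    constructor
    · intro hM
      have := hM.2
      rwa [Sym2.map_pair_eq, Sym2.mk_isDiag_iff] at this
    · intro hnM hcc
      exact hnM ⟨(SimpleGraph.mem_edgeSet G).mpr huv, by rw [Sym2.map_pair_eq, Sym2.mk_isDiag_iff]; exact hcc⟩
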